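/- Let a, b, c, A, B, C be nonnegative real numbers with c > 0 or C > 0. Then √(a² + A²) + √(b² + B²) − √(c² + C²) ≥ ((a + b − c)·c + (A + B − C)·C) / √(c² + C²). -/
import Mathlib

lemma cauchy2 (x y u v : ℝ) (hx : 0 ≤ x) (hy : 0 ≤ y) (hu : 0 ≤ u) (hv : 0 ≤ v) :
    x * u + y * v ≤ Real.sqrt (x ^ 2 + y ^ 2) * Real.sqrt (u ^ 2 + v ^ 2) := by
  rw [← Real.sqrt_mul (by positivity)]
  have h : x * u + y * v = Real.sqrt ((x * u + y * v) ^ 2) := by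
    rw [Real.sqrt_sq (by positivity)]
  rw [h]
  exact Real.sqrt_le_sqrt (by nlinarith [sq_nonneg (x * v - y * u)])

/-- Key elementary inequality comparing triangle defects of a map and its graph map. -/
theorem sqrt_sum_sq_defect_ge
    (a b c A B C : ℝ) (ha : 0 ≤ a) (hb : 0 ≤ b) (hc : 0 ≤ c)
    (hA : 0 ≤ A) (hB : 0 ≤ B) (hC : 0 ≤ C) (hpos : 0 < c ∨ 0 < C) :
    Real.sqrt (a ^ 2 + A ^ 2) + Real.sqrt (b ^ 2 + B ^ 2) - Real.sqrt (c ^ 2 + C ^ 2) ≥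
      ((a + b - c) * c + (A + B - C) * C) / Real.sqrt (c ^ 2 + C ^ 2) := by
  have hcc : 0 < c ^ 2 + C ^ 2 := by rcases hpos with h | h <;> positivity
  have hs : 0 < Real.sqrt (c ^ 2 + C ^ 2) := Real.sqrt_pos.mpr hcc
  have hss : Real.sqrt (c ^ 2 + C ^ 2) * Real.sqrt (c ^ 2 + C ^ 2) = c ^ 2 + C ^ 2 :=
    Real.mul_self_sqrt hcc.le
  rw [ge_iff_le, div_le_iff₀ hs]
  have h1 := cauchy2 a A c C ha hA hc hC
  have h2 := cauchy2 b B c C hb hB hc hC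
  nlinarith [h1, h2, hs, hss]
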